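/- arXiv:2304.04497 — 3 statements merged into one kernel-verified Lean document; each statement's English description precedes it below -/
import Mathlib

section
/- (Theorem 4.1) Let K ≥ 2 be the number of communities of a network generated by the affiliation graph model with intra-community edge probability p > 0, with community sizes N_{C_1},…,N_{C_K} (natural numbers), minimum size N_min and maximum size N_max. Suppose there is a real ε > 0 with N_max − N_min ≤ ε and ε ≤ (N_min − 1)/K − 1. If node u belongs to a set S of M communities and node v belongs to a set S′ of M′ communities with M′ < M (so M′ < M ≤ K), then the expected degree of u is at least the expected degree of v; that is, Σ_{i∈S}(N_{C_i} − 1)·p ≥ Σ_{j∈S′}(N_{C_j} − 1)·p. -/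
/-- **Theorem 4.1.** In an AGM network with `K ≥ 2` communities of sizes `NC i`,
intra-community edge probability `p > 0`, minimum size `Nmin`, maximum size `Nmax`,
and `ε > 0` with `Nmax − Nmin ≤ ε ≤ (Nmin − 1)/K − 1`: if node `u` belongs to a set
`S` of `M` communities and node `v` to a set `S'` of `M'` communities with `M' < M`,
then the expected degree of `u` is at least that of `v`. -/
theorem agm_expected_degree_mono
    (K : ℕ) (hK : 2 ≤ K) (p : ℝ) (hp : 0 < p)
    (NC : Fin K → ℕ) (Nmin Nmax : ℕ)
    (hNmin : Nmin = sInf (Set.range NC))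
    (hNmax : Nmax = sSup (Set.range NC))
    (ε : ℝ) (hε : 0 < ε)
    (hdiff : (Nmax : ℝ) - (Nmin : ℝ) ≤ ε)
    (hεK : ε ≤ ((Nmin : ℝ) - 1) / (K : ℝ) - 1)
    (S S' : Finset (Fin K)) (M M' : ℕ)
    (hS : S.card = M) (hS' : S'.card = M') (hMM : M' < M) :
    ∑ j ∈ S', ((NC j : ℝ) - 1) * p ≤ ∑ i ∈ S, ((NC i : ℝ) - 1) * p := by
  have hKpos : (0:ℝ) < K := by positivity
  have hεK' : ε * K ≤ (Nmin : ℝ) - 1 - K := by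
    have := (div_sub_one (by positivity : (K:ℝ) ≠ 0)).symm ▸ hεK
    rw [le_div_iff₀ hKpos] at this
    linarith
  -- bounds on community sizes
  have hfin : (Set.range NC).Finite := Set.finite_range NC
  have hlow : ∀ i : Fin K, Nmin ≤ NC i := by
    intro i
    rw [hNmin]
    exact Nat.sInf_le ⟨i, rfl⟩
  have hhigh : ∀ i : Fin K, NC i ≤ Nmax := by
    intro i
    rw [hNmax]
    exact le_csSup hfin.bddAbove ⟨i, rfl⟩
  -- sum bounds
  have h1 : ∑ j ∈ S', ((NC j : ℝ) - 1) * p ≤ (M' : ℝ) * (((Nmax : ℝ) - 1) * p) := by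
    rw [← hS']
    calc ∑ j ∈ S', ((NC j : ℝ) - 1) * p ≤ ∑ _j ∈ S', ((Nmax : ℝ) - 1) * p := by
          apply Finset.sum_le_sum
          intro j _
          have : (NC j : ℝ) ≤ (Nmax : ℝ) := Nat.cast_le.mpr (hhigh j)
          nlinarith
      _ = (S'.card : ℝ) * (((Nmax : ℝ) - 1) * p) := by
          rw [Finset.sum_const, nsmul_eq_mul]
  have h2 : (M : ℝ) * (((Nmin : ℝ) - 1) * p) ≤ ∑ i ∈ S, ((NC i : ℝ) - 1) * p := by
    rw [← hS]
    calc (S.card : ℝ) * (((Nmin : ℝ) - 1) * p) = ∑ _i ∈ S, ((Nmin : ℝ) - 1) * p := by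
          rw [Finset.sum_const, nsmul_eq_mul]
      _ ≤ ∑ i ∈ S, ((NC i : ℝ) - 1) * p := by
          apply Finset.sum_le_sum
          intro i _
          have : (Nmin : ℝ) ≤ (NC i : ℝ) := Nat.cast_le.mpr (hlow i)
          nlinarith
  -- middle inequality
  have hMK : (M : ℝ) ≤ (K : ℝ) := by
    exact_mod_cast hS ▸ le_trans (Finset.card_le_card (Finset.subset_univ S))
      (by simp : (Finset.univ : Finset (Fin K)).card ≤ K)
  have hM'M : (M' : ℝ) + 1 ≤ (M : ℝ) := by exact_mod_cast hMM
  have hM'0 : (0:ℝ) ≤ M' := Nat.cast_nonneg _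
  have hmid : (M' : ℝ) * (((Nmax : ℝ) - 1) * p) ≤ (M : ℝ) * (((Nmin : ℝ) - 1) * p) := by
    have hb : (Nmax : ℝ) - 1 ≤ ((Nmin : ℝ) - 1) + ε := by linarith
    have ha : (0:ℝ) ≤ ((Nmin : ℝ) - 1) + ε := by nlinarith
    have hstep1 : (M' : ℝ) * ((Nmax : ℝ) - 1) ≤ (M' : ℝ) * (((Nmin : ℝ) - 1) + ε) :=
      mul_le_mul_of_nonneg_left hb hM'0
    have hstep2 : (M' : ℝ) * (((Nmin : ℝ) - 1) + ε) ≤ ((M : ℝ) - 1) * (((Nmin : ℝ) - 1) + ε) :=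
      mul_le_mul_of_nonneg_right (by linarith) ha
    have hstep3 : ((M : ℝ) - 1) * ε ≤ ((K : ℝ) - 1) * ε :=
      mul_le_mul_of_nonneg_right (by linarith) hε.le
    have hcore : (M' : ℝ) * ((Nmax : ℝ) - 1) ≤ (M : ℝ) * ((Nmin : ℝ) - 1) := by
      nlinarith
    calc (M' : ℝ) * (((Nmax : ℝ) - 1) * p) = ((M' : ℝ) * ((Nmax : ℝ) - 1)) * p := by ring
      _ ≤ ((M : ℝ) * ((Nmin : ℝ) - 1)) * p := mul_le_mul_of_nonneg_right hcore hp.le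
      _ = (M : ℝ) * (((Nmin : ℝ) - 1) * p) := by ring
  linarith
end

section
/- (Key inequality in the proof of Theorem 4.1) Let K ≥ 2 be a natural number, let M and M′ be natural numbers with M′ < M ≤ K, and let N_min, N_max ≥ 1 and ε > 0 be real numbers with N_max ≤ N_min + ε and ε ≤ (N_min − 1)/K − 1. Then M·(N_min − 1) ≥ M′·(N_max − 1). -/
/-- **Key inequality in the proof of Theorem 4.1.** For `K ≥ 2`, `M' < M ≤ K`,
`Nmin, Nmax ≥ 1`, `ε > 0` with `Nmax ≤ Nmin + ε` and `ε ≤ (Nmin − 1)/K − 1`: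
`M·(Nmin − 1) ≥ M'·(Nmax − 1)`. -/
theorem key_inequality_thm41
    (K M M' : ℕ) (hK : 2 ≤ K) (hM'M : M' < M) (hMK : M ≤ K)
    (Nmin Nmax ε : ℝ) (hNmin : 1 ≤ Nmin) (hNmax : 1 ≤ Nmax)
    (hε : 0 < ε) (hdiff : Nmax ≤ Nmin + ε)
    (hεK : ε ≤ (Nmin - 1) / (K : ℝ) - 1) :
    (M' : ℝ) * (Nmax - 1) ≤ (M : ℝ) * (Nmin - 1) := by
  have hKpos : (0:ℝ) < (K:ℝ) := by
    have : 0 < K := by omega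
    exact_mod_cast this
  have hM'r : (M':ℝ) + 1 ≤ (M:ℝ) := by exact_mod_cast hM'M
  have hMKr : (M:ℝ) ≤ (K:ℝ) := by exact_mod_cast hMK
  have hM'nn : (0:ℝ) ≤ (M':ℝ) := Nat.cast_nonneg _
  have ha : 0 ≤ Nmin - 1 := by linarith
  have hb : Nmax - 1 ≤ (Nmin - 1) + (Nmin - 1) / K := by linarith
  have hdivK : (Nmin - 1) / K * K = Nmin - 1 := div_mul_cancel₀ _ (ne_of_gt hKpos)
  nlinarith [mul_le_mul_of_nonneg_left hb hM'nn, div_nonneg ha hKpos.le,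
    mul_le_mul_of_nonneg_left hMKr (div_nonneg ha hKpos.le)]
end

section
/- (Theorem 4.2) Let K ≥ 2 and partition the N > 0 nodes into K subsets according to the number of communities they belong to, with subset sizes n_1,…,n_K ≥ 0 summing to N, and let e_i ≥ 0 denote the average degree of nodes in subset i. Assume n_1 ≤ (2/3)·N and e_1·n_1 ≥ Σ_{i=2}^K e_i·n_i, and assume e_1 ≤ (N_max − 1)·p (a node in exactly one community has expected degree at most (N_max − 1)·p). Let the community sizes satisfy 1 ≤ N_min ≤ N_{C_i} ≤ N_max for all communities, with N_max ≤ N_min + ε for some ε > 0 satisfying ε ≤ (N_min − 1)/K − 1, and let p > 0. Then for any node u belonging to M ≥ 2 communities C_1,…,C_M, the network-average expected degree is at most the expected degree of u: (Σ_{i=1}^K e_i·n_i)/N ≤ Σ_{i=1}^M (N_{C_i} − 1)·p. -/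
/-- **Theorem 4.2.** Partition the `N > 0` nodes of an AGM network with `K ≥ 2`
communities into `K` subsets according to the number of communities they belong to,
with subset sizes `n i ≥ 0` summing to `N` and average degrees `e i ≥ 0` (`i = 1, …, K`).
Assume `n 1 ≤ (2/3)·N`, `e 1 · n 1 ≥ Σ_{i=2}^K e i · n i`, and `e 1 ≤ (Nmax − 1)·p`.
Let the community sizes of the `M ≥ 2` communities of node `u` satisfy
`1 ≤ Nmin ≤ NC i ≤ Nmax`, with `Nmax ≤ Nmin + ε` for some `ε > 0` with
`ε ≤ (Nmin − 1)/K − 1`, and let `p > 0`. Then the network-average expected degree is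
at most the expected degree of `u`. -/
theorem thm42_average_le_overlap_degree
    (K : ℕ) (hK : 2 ≤ K) (N : ℝ) (hN : 0 < N)
    (n e : ℕ → ℝ)
    (hn : ∀ i ∈ Finset.Icc 1 K, 0 ≤ n i)
    (he : ∀ i ∈ Finset.Icc 1 K, 0 ≤ e i)
    (hsum : ∑ i ∈ Finset.Icc 1 K, n i = N)
    (h1 : n 1 ≤ 2 / 3 * N)
    (h2 : ∑ i ∈ Finset.Icc 2 K, e i * n i ≤ e 1 * n 1)
    (p : ℝ) (hp : 0 < p)
    (Nmin Nmax ε : ℝ) (hNmin : 1 ≤ Nmin) (hε : 0 < ε)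
    (hdiff : Nmax ≤ Nmin + ε)
    (hεK : ε ≤ (Nmin - 1) / (K : ℝ) - 1)
    (h3 : e 1 ≤ (Nmax - 1) * p)
    (M : ℕ) (hM : 2 ≤ M)
    (NC : ℕ → ℝ)
    (hNC : ∀ i ∈ Finset.Icc 1 M, Nmin ≤ NC i ∧ NC i ≤ Nmax) :
    (∑ i ∈ Finset.Icc 1 K, e i * n i) / N ≤ ∑ i ∈ Finset.Icc 1 M, (NC i - 1) * p := by
  have h1mem : (1 : ℕ) ∈ Finset.Icc 1 K := by
    simp [Finset.mem_Icc]; omega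
  have he1 : 0 ≤ e 1 := he 1 h1mem
  have hn1 : 0 ≤ n 1 := hn 1 h1mem
  -- split the sum
  have hsplit : Finset.Icc 1 K = insert 1 (Finset.Icc 2 K) := by
    ext x; simp [Finset.mem_Icc, Finset.mem_insert]; omega
  have hnot : (1 : ℕ) ∉ Finset.Icc 2 K := by simp
  have hsum2 : ∑ i ∈ Finset.Icc 1 K, e i * n i
      = e 1 * n 1 + ∑ i ∈ Finset.Icc 2 K, e i * n i := by
    rw [hsplit, Finset.sum_insert hnot]
  have hLHS : ∑ i ∈ Finset.Icc 1 K, e i * n i ≤ 2 * (e 1 * n 1) := by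
    rw [hsum2]; linarith
  -- LHS/N ≤ (4/3) e 1
  have hstep1 : (∑ i ∈ Finset.Icc 1 K, e i * n i) / N ≤ 4 / 3 * e 1 := by
    rw [div_le_iff₀ hN]
    have : e 1 * n 1 ≤ e 1 * (2 / 3 * N) := by
      apply mul_le_mul_of_nonneg_left h1 he1
    nlinarith
  -- Nmax - 1 ≤ (3/2)(Nmin - 1)
  have hKpos : (0 : ℝ) < (K : ℝ) := by positivity
  have hK2 : (2 : ℝ) ≤ (K : ℝ) := by exact_mod_cast hK
  have hNmin1 : 0 ≤ Nmin - 1 := by linarith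
  have hdivK : (Nmin - 1) / (K : ℝ) ≤ (Nmin - 1) / 2 :=
    div_le_div_of_nonneg_left hNmin1 (by norm_num) hK2
  have hNmax : Nmax - 1 ≤ 3 / 2 * (Nmin - 1) := by
    linarith [hdiff, hεK, hdivK]
  -- (4/3) e 1 ≤ 2 (Nmin - 1) p
  have hstep2 : 4 / 3 * e 1 ≤ 2 * ((Nmin - 1) * p) := by
    nlinarith [h3, hp.le]
  -- RHS lower bound
  have hRHS : 2 * ((Nmin - 1) * p) ≤ ∑ i ∈ Finset.Icc 1 M, (NC i - 1) * p := by
    have hcard : (Finset.Icc 1 M).card = M := by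
      rw [Nat.card_Icc]; omega
    calc 2 * ((Nmin - 1) * p) ≤ (M : ℝ) * ((Nmin - 1) * p) := by
          have : (2 : ℝ) ≤ (M : ℝ) := by exact_mod_cast hM
          nlinarith [mul_nonneg hNmin1 hp.le]
      _ = ∑ i ∈ Finset.Icc 1 M, (Nmin - 1) * p := by
          rw [Finset.sum_const, hcard, nsmul_eq_mul]
      _ ≤ ∑ i ∈ Finset.Icc 1 M, (NC i - 1) * p := by
          apply Finset.sum_le_sum
          intro i hi
          have := (hNC i hi).1
          nlinarith [hp.le]
  linarith
end
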